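/- Let $\Sigma$ be a complete sign-coherent fan of rank 2 containing the cone generated by $(-1,0),(0,1)$ (i.e. $\Sigma\in \mathsf{c}\text{-}\mathsf{Fan}^{+-}_{sc}(2)$). Then $\Sigma$ can be obtained from the fan $\Sigma(0,0;0,0)$ (the fan with four maximal cones, the four quadrants) by a finite sequence of subdivisions, where subdivision at a cone $\mathrm{cone}\{u,v\}$ replaces it by $\mathrm{cone}\{u,u+v\}$ and $\mathrm{cone}\{v,u+v\}$. -/

import Mathlib

/-- Arithmetic core: in a unimodular chain the maximal ray is the sum of its neighbors. -/
theorem stmt8_key_eq (u v w : ℤ × ℤ)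
    (h1 : u.1 * w.2 - u.2 * w.1 = -1)
    (h2 : w.1 * v.2 - w.2 * v.1 = -1)
    (hNu1 : 1 ≤ u.1 - u.2) (hNv1 : 1 ≤ v.1 - v.2)
    (hNw : 2 ≤ w.1 - w.2)
    (hNu : u.1 - u.2 ≤ w.1 - w.2) (hNv : v.1 - v.2 ≤ w.1 - w.2)
    (hu2 : u = (1, 0) ∨ 2 ≤ u.1 - u.2) :
    w = u + v := by
  set c : ℤ := u.2 * v.1 - u.1 * v.2 with hc
  have e1 : u.1 + v.1 = c * w.1 := by rw [hc]; linear_combination v.1 * h1 + u.1 * h2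
  have e2 : u.2 + v.2 = c * w.2 := by rw [hc]; linear_combination v.2 * h1 + u.2 * h2
  have eN : (u.1 - u.2) + (v.1 - v.2) = c * (w.1 - w.2) := by linear_combination e1 - e2
  have hcpos : 1 ≤ c := by nlinarith
  rcases eq_or_lt_of_le hcpos with h | h
  · rw [← h, one_mul] at e1 e2
    apply Prod.ext
    · simpa using e1.symm
    · simpa using e2.symm
  · exfalso
    have hc2 : 2 ≤ c := by omega
    have h2Nw : c * (w.1 - w.2) ≤ 2 * (w.1 - w.2) := by linarith
    have hceq : c = 2 := le_antisymm (le_of_mul_le_mul_right h2Nw (by linarith)) hc2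
    rw [hceq] at eN
    have hNuw : u.1 - u.2 = w.1 - w.2 := by linarith
    rcases hu2 with rfl | hu2
    · norm_num at hNuw; omega
    · have hkey : (u.1 - u.2) * (w.1 - u.1) = -1 := by
        linear_combination h1 - u.1 * hNuw
      have hdvd : (u.1 - u.2) ∣ 1 := ⟨u.1 - w.1, by linear_combination hkey⟩
      have := Int.le_of_dvd one_pos hdvd
      linarith

theorem stmt8_main : ∀ (n : ℕ) (M : List (ℤ × ℤ)), M.length = n →
    (∀ w ∈ M, 0 < w.1 ∧ w.2 < 0) →
    List.Chain' (fun u v : ℤ × ℤ => u.1 * v.2 - u.2 * v.1 = -1)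
      (((1, 0) : ℤ × ℤ) :: M ++ [(0, -1)]) →
    Relation.ReflTransGen
      (fun R R' : List (ℤ × ℤ) => ∃ (R₁ R₂ : List (ℤ × ℤ)) (u v : ℤ × ℤ),
        R = R₁ ++ u :: v :: R₂ ∧ R' = R₁ ++ u :: (u + v) :: v :: R₂)
      [(1, 0), (0, -1), (-1, 0), (0, 1)]
      (((1, 0) : ℤ × ℤ) :: M ++ [(0, -1), (-1, 0), (0, 1)]) := by
  intro n
  induction n with
  | zero =>
    intro M hlen _ _
    rw [List.length_eq_zero_iff] at hlen
    subst hlen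
    exact .refl
  | succ n ih =>
    intro M hlen hquad hchain
    have hMne : M ≠ [] := by intro h; simp [h] at hlen
    obtain ⟨a, ha⟩ := List.exists_mem_of_ne_nil M hMne
    obtain ⟨w, hwF, hmaxF⟩ := M.toFinset.exists_max_image (fun x => x.1 - x.2)
      ⟨a, List.mem_toFinset.2 ha⟩
    have hwM : w ∈ M := List.mem_toFinset.1 hwF
    have hmax : ∀ x ∈ M, x.1 - x.2 ≤ w.1 - w.2 :=
      fun x hx => hmaxF x (List.mem_toFinset.2 hx)
    obtain ⟨A, B, rfl⟩ := List.append_of_mem hwM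
    set l1 : List (ℤ × ℤ) := ((1, 0) : ℤ × ℤ) :: A with hl1def
    set l2 : List (ℤ × ℤ) := B ++ [((0 : ℤ), (-1 : ℤ))] with hl2def
    have hl1 : l1 ≠ [] := List.cons_ne_nil _ _
    have hl2 : l2 ≠ [] := by simp [hl2def]
    set u := l1.getLast hl1 with hudef
    set v := l2.head hl2 with hvdef
    have hch : List.Chain' (fun u v : ℤ × ℤ => u.1 * v.2 - u.2 * v.1 = -1)
        (l1 ++ w :: l2) := by
      simpa [hl1def, hl2def] using hchain
    rw [List.Chain', List.isChain_append] at hch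
    obtain ⟨hc1, hc2, hj1⟩ := hch
    rw [List.isChain_cons] at hc2
    obtain ⟨hj2, hc3⟩ := hc2
    have hDuw : u.1 * w.2 - u.2 * w.1 = -1 :=
      hj1 u (by rw [List.getLast?_eq_getLast hl1]; rfl) w rfl
    have hDwv : w.1 * v.2 - w.2 * v.1 = -1 :=
      hj2 v (by rw [List.head?_eq_head hl2]; rfl)
    have huMem : u = (1, 0) ∨ u ∈ A := by
      have h : u ∈ l1 := by rw [hudef]; exact List.getLast_mem hl1
      rw [hl1def] at h
      exact List.mem_cons.mp h
    have hvMem : v ∈ B ∨ v = (0, -1) := by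
      have h : v ∈ l2 := by rw [hvdef]; exact List.head_mem hl2
      rw [hl2def] at h
      simpa using List.mem_append.mp h
    have hNw2 : 2 ≤ w.1 - w.2 := by
      have := hquad w (by simp)
      omega
    have hufacts : 1 ≤ u.1 - u.2 ∧ u.1 - u.2 ≤ w.1 - w.2 ∧ (u = (1, 0) ∨ 2 ≤ u.1 - u.2) := by
      rcases huMem with h | h
      · rw [h]; norm_num; omega
      · have hq := hquad u (by simp [h])
        have hm := hmax u (by simp [h])
        exact ⟨by omega, hm, Or.inr (by omega)⟩
    have hvfacts : 1 ≤ v.1 - v.2 ∧ v.1 - v.2 ≤ w.1 - w.2 := by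
      rcases hvMem with h | h
      · have hq := hquad v (by simp [h])
        have hm := hmax v (by simp [h])
        exact ⟨by omega, hm⟩
      · rw [h]; norm_num; omega
    have hw : w = u + v :=
      stmt8_key_eq u v w hDuw hDwv hufacts.1 hvfacts.1 hNw2 hufacts.2.1 hvfacts.2 hufacts.2.2
    have hw1 : w.1 = u.1 + v.1 := by rw [hw]; rfl
    have hw2 : w.2 = u.2 + v.2 := by rw [hw]; rfl
    have hDuv : u.1 * v.2 - u.2 * v.1 = -1 := by
      linear_combination hDuw - u.1 * hw2 + u.2 * hw1
    have hquad' : ∀ x ∈ A ++ B, 0 < x.1 ∧ x.2 < 0 := by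
      intro x hx
      apply hquad x
      simp only [List.mem_append, List.mem_cons] at hx ⊢
      tauto
    have hlen' : (A ++ B).length = n := by
      simp only [List.length_append, List.length_cons] at hlen ⊢
      omega
    have hch' : List.Chain' (fun u v : ℤ × ℤ => u.1 * v.2 - u.2 * v.1 = -1)
        (((1, 0) : ℤ × ℤ) :: (A ++ B) ++ [(0, -1)]) := by
      have heq : ((1, 0) : ℤ × ℤ) :: (A ++ B) ++ [((0 : ℤ), (-1 : ℤ))] = l1 ++ l2 := by
        simp [hl1def, hl2def]
      rw [heq, List.Chain', List.isChain_append]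
      refine ⟨hc1, hc3, ?_⟩
      intro x hx y hy
      rw [List.getLast?_eq_getLast hl1] at hx
      rw [List.head?_eq_head hl2] at hy
      simp only [Option.mem_def, Option.some.injEq] at hx hy
      rw [← hx, ← hy]
      exact hDuv
    have P := ih (A ++ B) hlen' hquad' hch'
    apply P.tail
    refine ⟨l1.dropLast, l2.tail ++ [(-1, 0), (0, 1)], u, v, ?_, ?_⟩
    · have e1 : l1.dropLast ++ [u] = l1 := List.dropLast_append_getLast hl1
      have e2 : v :: l2.tail = l2 := List.cons_head_tail hl2
      rw [show l1.dropLast ++ u :: v :: (l2.tail ++ [((-1 : ℤ), (0 : ℤ)), (0, 1)]) =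
          (l1.dropLast ++ [u]) ++ ((v :: l2.tail) ++ [((-1 : ℤ), (0 : ℤ)), (0, 1)]) by simp]
      rw [e1, e2]
      simp [hl1def, hl2def]
    · have e1 : l1.dropLast ++ [u] = l1 := List.dropLast_append_getLast hl1
      have e2 : v :: l2.tail = l2 := List.cons_head_tail hl2
      rw [show l1.dropLast ++ u :: (u + v) :: v :: (l2.tail ++ [((-1 : ℤ), (0 : ℤ)), (0, 1)]) =
          (l1.dropLast ++ [u]) ++ ((u + v) :: ((v :: l2.tail) ++ [((-1 : ℤ), (0 : ℤ)), (0, 1)])) by simp]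
      rw [e1, e2, ← hw]
      simp [hl1def, hl2def]

/-- Every complete sign-coherent fan of rank 2 containing
`cone{(-1,0),(0,1)}` — encoded by its clockwise list of rays
`(1,0), w₁, …, w_m, (0,-1), (-1,0), (0,1)` where the `wᵢ` lie in the open fourth
quadrant and consecutive rays form a clockwise `ℤ`-basis — is obtained from the
four-quadrant fan `Σ(0,0;0,0)` by a finite sequence of subdivisions, where a
subdivision replaces consecutive rays `u, v` by `u, u+v, v`. -/
theorem stmt_8 (M : List (ℤ × ℤ))
    (hquad : ∀ w ∈ M, 0 < w.1 ∧ w.2 < 0)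
    (hchain : List.Chain' (fun u v : ℤ × ℤ => u.1 * v.2 - u.2 * v.1 = -1)
      (((1, 0) : ℤ × ℤ) :: M ++ [(0, -1), (-1, 0), (0, 1)])) :
    Relation.ReflTransGen
      (fun R R' : List (ℤ × ℤ) => ∃ (R₁ R₂ : List (ℤ × ℤ)) (u v : ℤ × ℤ),
        R = R₁ ++ u :: v :: R₂ ∧ R' = R₁ ++ u :: (u + v) :: v :: R₂)
      [(1, 0), (0, -1), (-1, 0), (0, 1)]
      (((1, 0) : ℤ × ℤ) :: M ++ [(0, -1), (-1, 0), (0, 1)]) := by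
  have hpre : List.Chain' (fun u v : ℤ × ℤ => u.1 * v.2 - u.2 * v.1 = -1)
      (((1, 0) : ℤ × ℤ) :: M ++ [(0, -1)]) := by
    have h' : List.Chain' (fun u v : ℤ × ℤ => u.1 * v.2 - u.2 * v.1 = -1)
        ((((1, 0) : ℤ × ℤ) :: M ++ [(0, -1)]) ++ [(-1, 0), (0, 1)]) := by
      simpa using hchain
    exact (List.isChain_append.1 h').1
  exact stmt8_main M.length M rfl hquad hpre
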